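/- Let n₀ be a fixed positive integer. Then there exists a real constant c such that σ^n(x) = c for all n ≥ n₀ if and only if there exists a real constant p such that ε_n/(q_n − 1) = p for all n > n₀; moreover, in that case c = p. -/

import Mathlib

/-- The `n`-th shift `σ^n(x) = Σ_{k=n+1}^∞ ε_k/(q_{n+1} q_{n+2} ⋯ q_k)` of the Cantor
series with bases `q` and digits `ε`; in particular `σ^0(x) = x`. -/
noncomputable def cantorShift (q ε : ℕ → ℕ) (n : ℕ) : ℝ :=
  ∑' k : ℕ, (ε (n + k + 1) : ℝ) / ∏ i ∈ Finset.Icc (n + 1) (n + k + 1), (q i : ℝ)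

open Finset

section
variable (q ε : ℕ → ℕ)

private lemma prod_pos' (hq : ∀ k, 1 ≤ k → 2 ≤ q k) (a b : ℕ) (ha : 1 ≤ a) :
    (0:ℝ) < ∏ i ∈ Icc a b, (q i : ℝ) := by
  apply Finset.prod_pos
  intro i hi
  have h2 : 2 ≤ q i := hq i (le_trans ha (mem_Icc.mp hi).1)
  have : (2:ℝ) ≤ q i := by exact_mod_cast h2
  linarith

private lemma prod_ge' (hq : ∀ k, 1 ≤ k → 2 ≤ q k) (a b : ℕ) (ha : 1 ≤ a) :
    (2:ℝ) ^ (Icc a b).card ≤ ∏ i ∈ Icc a b, (q i : ℝ) := by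
  rw [← Finset.prod_const]
  apply Finset.prod_le_prod (fun _ _ => by norm_num)
  intro i hi
  exact_mod_cast hq i (le_trans ha (mem_Icc.mp hi).1)

private lemma summable_f (hq : ∀ k, 1 ≤ k → 2 ≤ q k) (hε : ∀ k, 1 ≤ k → ε k ≤ q k - 1)
    (n : ℕ) :
    Summable (fun k : ℕ => (ε (n + k + 1) : ℝ) / ∏ i ∈ Icc (n + 1) (n + k + 1), (q i : ℝ)) := by
  refine Summable.of_nonneg_of_le ?_ ?_ summable_geometric_two
  · intro k
    exact div_nonneg (Nat.cast_nonneg _) (prod_pos' q hq _ _ (by omega)).le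
  · intro k
    have hsplit : ∏ i ∈ Icc (n + 1) (n + k + 1), (q i : ℝ)
        = (∏ i ∈ Icc (n + 1) (n + k), (q i : ℝ)) * q (n + k + 1) :=
      Finset.prod_Icc_succ_top (by omega) _
    have hcard : (Icc (n + 1) (n + k)).card = k := by rw [Nat.card_Icc]; omega
    have hQ : (2:ℝ) ^ k ≤ ∏ i ∈ Icc (n + 1) (n + k), (q i : ℝ) := by
      have h' := prod_ge' q hq (n+1) (n+k) (by omega)
      rwa [hcard] at h'
    have hql2 : (2:ℝ) ≤ q (n + k + 1) := by exact_mod_cast hq (n+k+1) (by omega)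
    have hql : (0:ℝ) < q (n + k + 1) := by linarith
    have hεle : (ε (n + k + 1) : ℝ) ≤ q (n + k + 1) := by
      have := hε (n + k + 1) (by omega)
      have : ε (n + k + 1) ≤ q (n + k + 1) := by omega
      exact_mod_cast this
    rw [div_le_iff₀ (prod_pos' q hq _ _ (by omega)), hsplit]
    calc (ε (n + k + 1) : ℝ) ≤ q (n + k + 1) := hεle
      _ = (1/2:ℝ)^k * ((2:ℝ)^k * q (n + k + 1)) := by
          rw [← mul_assoc, one_div, inv_pow, inv_mul_cancel₀ (by positivity), one_mul]
      _ ≤ (1/2:ℝ)^k * ((∏ i ∈ Icc (n + 1) (n + k), (q i : ℝ)) * q (n + k + 1)) := by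
          apply mul_le_mul_of_nonneg_left _ (by positivity)
          exact mul_le_mul_of_nonneg_right hQ hql.le

private lemma shift_rec (hq : ∀ k, 1 ≤ k → 2 ≤ q k) (hε : ∀ k, 1 ≤ k → ε k ≤ q k - 1)
    (n : ℕ) :
    cantorShift q ε n = ((ε (n + 1) : ℝ) + cantorShift q ε (n + 1)) / q (n + 1) := by
  unfold cantorShift
  rw [Summable.tsum_eq_zero_add (summable_f q ε hq hε n)]
  have h0 : (ε (n + 0 + 1) : ℝ) / ∏ i ∈ Icc (n + 1) (n + 0 + 1), (q i : ℝ)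
      = (ε (n + 1) : ℝ) / q (n + 1) := by
    simp
  have h1 : ∀ k : ℕ, (ε (n + (k + 1) + 1) : ℝ) / ∏ i ∈ Icc (n + 1) (n + (k + 1) + 1), (q i : ℝ)
      = ((ε (n + 1 + k + 1) : ℝ) / ∏ i ∈ Icc (n + 1 + 1) (n + 1 + k + 1), (q i : ℝ)) / q (n + 1) := by
    intro k
    have hIcc : Icc (n + 1) (n + (k + 1) + 1) = Ico (n + 1) (n + k + 3) := by
      rw [show n + k + 3 = n + k + 2 + 1 from rfl, Finset.Ico_add_one_right_eq_Icc]; ring_nf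
    have hIcc2 : Ico (n + 2) (n + k + 3) = Icc (n + 1 + 1) (n + 1 + k + 1) := by
      rw [show n + k + 3 = n + k + 2 + 1 from rfl, Finset.Ico_add_one_right_eq_Icc]; congr 1 <;> ring
    have hsplit : ∏ i ∈ Ico (n + 1) (n + k + 3), (q i : ℝ)
        = (q (n + 1) : ℝ) * ∏ i ∈ Ico (n + 2) (n + k + 3), (q i : ℝ) :=
      Finset.prod_eq_prod_Ico_succ_bot (by omega) _
    rw [hIcc, hsplit, hIcc2]
    have hidx : n + (k + 1) + 1 = n + 1 + k + 1 := by ring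
    rw [hidx, div_div, mul_comm]
  simp only [h1]
  rw [tsum_div_const, h0]
  ring

private lemma shift_eq_of_ratio (hq : ∀ k, 1 ≤ k → 2 ≤ q k) (p : ℝ) (n : ℕ)
    (h : ∀ k : ℕ, (ε (n + k + 1) : ℝ) = p * ((q (n + k + 1) : ℝ) - 1)) :
    cantorShift q ε n = p := by
  set G : ℕ → ℝ := fun k => (∏ i ∈ Icc (n + 1) (n + k), (q i : ℝ))⁻¹ with hG
  have hQpos : ∀ k, (0:ℝ) < ∏ i ∈ Icc (n + 1) (n + k), (q i : ℝ) :=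
    fun k => prod_pos' q hq _ _ (by omega)
  have hterm : ∀ k : ℕ, (ε (n + k + 1) : ℝ) / ∏ i ∈ Icc (n + 1) (n + k + 1), (q i : ℝ)
      = p * (G k - G (k + 1)) := by
    intro k
    have hsplit : ∏ i ∈ Icc (n + 1) (n + k + 1), (q i : ℝ)
        = (∏ i ∈ Icc (n + 1) (n + k), (q i : ℝ)) * q (n + k + 1) :=
      Finset.prod_Icc_succ_top (by omega) _
    have hql : (0:ℝ) < q (n + k + 1) := by
      have : (2:ℝ) ≤ q (n + k + 1) := by exact_mod_cast hq (n+k+1) (by omega)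
      linarith
    have hGk1 : G (k + 1) = ((∏ i ∈ Icc (n + 1) (n + k), (q i : ℝ)) * q (n + k + 1))⁻¹ := by
      have h' : G (k + 1) = (∏ i ∈ Icc (n + 1) (n + k + 1), (q i : ℝ))⁻¹ := rfl
      rw [h', hsplit]
    have hQne := (hQpos k).ne'
    have hqlne := hql.ne'
    rw [h k, hsplit, hGk1]
    simp only [hG]
    rw [mul_inv, mul_sub, mul_comm]
    rw [div_eq_iff (by positivity : ((∏ i ∈ Icc (n + 1) (n + k), (q i : ℝ)) * q (n + k + 1)) ≠ 0)]
    field_simp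
  have hGanti : ∀ k, 0 ≤ G k - G (k + 1) := by
    intro k
    have hsplit : ∏ i ∈ Icc (n + 1) (n + k + 1), (q i : ℝ)
        = (∏ i ∈ Icc (n + 1) (n + k), (q i : ℝ)) * q (n + k + 1) :=
      Finset.prod_Icc_succ_top (by omega) _
    have hql : (1:ℝ) ≤ q (n + k + 1) := by
      have : (2:ℝ) ≤ q (n + k + 1) := by exact_mod_cast hq (n+k+1) (by omega)
      linarith
    have : ∏ i ∈ Icc (n + 1) (n + k), (q i : ℝ) ≤ ∏ i ∈ Icc (n + 1) (n + k + 1), (q i : ℝ) := by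
      rw [hsplit]
      nlinarith [hQpos k]
    simp only [hG, sub_nonneg]
    exact inv_anti₀ (hQpos k) this
  have hG0 : G 0 = 1 := by
    have he : Icc (n + 1) (n + 0) = (∅ : Finset ℕ) := Finset.Icc_eq_empty (by omega)
    simp [hG, he]
  have hGlim : Filter.Tendsto G Filter.atTop (nhds 0) := by
    apply squeeze_zero (fun k => (inv_pos.mpr (hQpos k)).le)
      (g := fun k : ℕ => (1/2:ℝ)^k)
    · intro k
      have hcard : (Icc (n + 1) (n + k)).card = k := by rw [Nat.card_Icc]; omega
      have hQ : (2:ℝ) ^ k ≤ ∏ i ∈ Icc (n + 1) (n + k), (q i : ℝ) := by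
        have h' := prod_ge' q hq (n+1) (n+k) (by omega)
        rwa [hcard] at h'
      show (∏ i ∈ Icc (n + 1) (n + k), (q i : ℝ))⁻¹ ≤ (1/2:ℝ)^k
      rw [one_div, inv_pow]
      exact inv_anti₀ (by positivity) hQ
    · exact tendsto_pow_atTop_nhds_zero_of_lt_one (by norm_num) (by norm_num)
  have htel : HasSum (fun k : ℕ => G k - G (k + 1)) 1 := by
    rw [hasSum_iff_tendsto_nat_of_nonneg hGanti]
    have : ∀ m : ℕ, ∑ i ∈ range m, (G i - G (i + 1)) = G 0 - G m :=
      fun m => Finset.sum_range_sub' G m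
    simp only [this, hG0]
    have := (tendsto_const_nhds (x := (1:ℝ)) (f := Filter.atTop (α := ℕ))).sub hGlim
    simpa using this
  have hsum : HasSum (fun k : ℕ => p * (G k - G (k + 1))) p := by
    simpa using htel.mul_left p
  unfold cantorShift
  rw [tsum_congr hterm]
  exact hsum.tsum_eq

end

/-- for a fixed positive integer `n₀`, the shifts `σ^n(x)` are constant
for all `n ≥ n₀` iff the ratios `ε_n/(q_n − 1)` are constant for all `n > n₀`;
moreover, in that case the two constants coincide. -/
theorem cantor_shift_const_iff_ratio_const
    (q : ℕ → ℕ) (hq : ∀ k, 1 ≤ k → 2 ≤ q k)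
    (ε : ℕ → ℕ) (hε : ∀ k, 1 ≤ k → ε k ≤ q k - 1)
    (x : ℝ) (hx : x = cantorShift q ε 0)
    (n₀ : ℕ) (hn₀ : 1 ≤ n₀) :
    ((∃ c : ℝ, ∀ n : ℕ, n₀ ≤ n → cantorShift q ε n = c) ↔
      (∃ p : ℝ, ∀ n : ℕ, n₀ < n → (ε n : ℝ) / ((q n : ℝ) - 1) = p)) ∧
    (∀ c p : ℝ, (∀ n : ℕ, n₀ ≤ n → cantorShift q ε n = c) →
      (∀ n : ℕ, n₀ < n → (ε n : ℝ) / ((q n : ℝ) - 1) = p) → c = p) := by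
  have ratio_of_const : ∀ c : ℝ, (∀ n : ℕ, n₀ ≤ n → cantorShift q ε n = c) →
      ∀ n : ℕ, n₀ < n → (ε n : ℝ) / ((q n : ℝ) - 1) = c := by
    intro c hc n hn
    have hrec := shift_rec q ε hq hε (n - 1)
    rw [hc (n - 1) (by omega), hc ((n - 1) + 1) (by omega)] at hrec
    have hidx : n - 1 + 1 = n := by omega
    rw [hidx] at hrec
    have hq2 : (2:ℝ) ≤ q n := by exact_mod_cast hq n (by omega)
    rw [eq_div_iff (by linarith : (q n : ℝ) ≠ 0)] at hrec
    rw [div_eq_iff (by linarith : (q n : ℝ) - 1 ≠ 0)]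
    linarith
  have const_of_ratio : ∀ p : ℝ, (∀ n : ℕ, n₀ < n → (ε n : ℝ) / ((q n : ℝ) - 1) = p) →
      ∀ n : ℕ, n₀ ≤ n → cantorShift q ε n = p := by
    intro p hp n hn
    apply shift_eq_of_ratio q ε hq p n
    intro k
    have hq2 : (2:ℝ) ≤ q (n + k + 1) := by exact_mod_cast hq (n + k + 1) (by omega)
    have h := hp (n + k + 1) (by omega)
    rw [div_eq_iff (by linarith : (q (n + k + 1) : ℝ) - 1 ≠ 0)] at h
    exact h
  refine ⟨⟨fun ⟨c, hc⟩ => ⟨c, ratio_of_const c hc⟩,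
    fun ⟨p, hp⟩ => ⟨p, const_of_ratio p hp⟩⟩, ?_⟩
  intro c p hc hp
  have h1 := ratio_of_const c hc (n₀ + 1) (by omega)
  have h2 := hp (n₀ + 1) (by omega)
  linarith
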